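/- The quotient of the space of nonempty compact subsets of ℝⁿ by isometric equivalence, equipped with the induced distance h̃, is a complete metric space. -/

import Mathlib

abbrev E (n : ℕ) := EuclideanSpace ℝ (Fin n)

/-- The nonempty compact subsets of `ℝⁿ`. -/
def CompactNE (n : ℕ) : Type :=
  {A : Set (E n) // IsCompact A ∧ A.Nonempty}

/-- Isometric equivalence of subsets of `ℝⁿ`. -/
def isomEquiv {n : ℕ} (A B : Set (E n)) : Prop :=
  ∃ φ : E n ≃ᵢ E n, B = φ '' A

/-- The modified Hausdorff distance (shape difference). -/
noncomputable def shapeDiff {n : ℕ} (A B : Set (E n)) : ℝ :=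
  sInf {r : ℝ | ∃ A₁ B₁ : Set (E n), isomEquiv A A₁ ∧ isomEquiv B B₁ ∧
    r = Metric.hausdorffDist A₁ B₁}

def isomSetoid (n : ℕ) : Setoid (CompactNE n) :=
  ⟨fun A B => isomEquiv A.1 B.1, by
    constructor
    · intro A; exact ⟨IsometryEquiv.refl _, by ext x; exact ⟨fun hx => ⟨x, hx, rfl⟩, fun ⟨y, hy, e⟩ => e ▸ hy⟩⟩
    · rintro A B ⟨φ, h⟩
      exact ⟨φ.symm, by simp [h, Set.image_image]⟩
    · rintro A B C ⟨φ, h⟩ ⟨ψ, h'⟩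
      exact ⟨φ.trans ψ, by simp [h', h, Set.image_image]; rfl⟩⟩

namespace SDAux
open Metric Set
variable {n : ℕ} {A B C : Set (E n)}

def Sset (A B : Set (E n)) : Set ℝ :=
  {r : ℝ | ∃ A₁ B₁ : Set (E n), isomEquiv A A₁ ∧ isomEquiv B B₁ ∧
    r = Metric.hausdorffDist A₁ B₁}

lemma shapeDiff_eq : shapeDiff A B = sInf (Sset A B) := rfl

lemma isomEquiv_refl (A : Set (E n)) : isomEquiv A A :=
  ⟨IsometryEquiv.refl _, by ext x; exact ⟨fun hx => ⟨x, hx, rfl⟩, fun ⟨y, hy, e⟩ => e ▸ hy⟩⟩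

lemma isomEquiv_symm (h : isomEquiv A B) : isomEquiv B A := by
  obtain ⟨φ, rfl⟩ := h
  exact ⟨φ.symm, by simp [Set.image_image]⟩

lemma isomEquiv_trans (h : isomEquiv A B) (h' : isomEquiv B C) : isomEquiv A C := by
  obtain ⟨φ, rfl⟩ := h; obtain ⟨ψ, rfl⟩ := h'
  exact ⟨φ.trans ψ, by simp [Set.image_image]; rfl⟩

lemma mem_Sset' (μ ν : E n ≃ᵢ E n) :
    hausdorffDist (μ '' A) (ν '' B) ∈ Sset A B :=
  ⟨μ '' A, ν '' B, ⟨μ, rfl⟩, ⟨ν, rfl⟩, rfl⟩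

lemma mem_Sset (φ : E n ≃ᵢ E n) : hausdorffDist A (φ '' B) ∈ Sset A B :=
  ⟨A, φ '' B, isomEquiv_refl A, ⟨φ, rfl⟩, rfl⟩

lemma Sset_nonneg {r : ℝ} (hr : r ∈ Sset A B) : 0 ≤ r := by
  obtain ⟨A₁, B₁, _, _, rfl⟩ := hr; exact hausdorffDist_nonneg

lemma Sset_bddBelow : BddBelow (Sset A B) := ⟨0, fun _ hr => Sset_nonneg hr⟩

lemma Sset_eq_range :
    Sset A B = Set.range (fun φ : E n ≃ᵢ E n => hausdorffDist A (φ '' B)) := by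
  apply Set.Subset.antisymm
  · rintro r ⟨A₁, B₁, ⟨φ, rfl⟩, ⟨ψ, rfl⟩, rfl⟩
    refine ⟨ψ.trans φ.symm, ?_⟩
    have := hausdorffDist_image (s := φ '' A) (t := ψ '' B) φ.symm.isometry
    rw [← this]
    simp [Set.image_image, IsometryEquiv.trans_apply]; rfl
  · rintro r ⟨φ, rfl⟩; exact mem_Sset φ

lemma shapeDiff_nonneg : 0 ≤ shapeDiff A B :=
  Real.sInf_nonneg (fun _ hr => Sset_nonneg hr)

lemma shapeDiff_le (φ : E n ≃ᵢ E n) : shapeDiff A B ≤ hausdorffDist A (φ '' B) :=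
  csInf_le Sset_bddBelow (mem_Sset φ)

lemma shapeDiff_le' (μ ν : E n ≃ᵢ E n) :
    shapeDiff A B ≤ hausdorffDist (μ '' A) (ν '' B) :=
  csInf_le Sset_bddBelow (mem_Sset' μ ν)

lemma exists_isometry_lt {ε : ℝ} (hε : 0 < ε) :
    ∃ φ : E n ≃ᵢ E n, hausdorffDist A (φ '' B) < shapeDiff A B + ε := by
  have hne : (Sset A B).Nonempty := ⟨_, mem_Sset (A := A) (B := B) (IsometryEquiv.refl _)⟩
  have : sInf (Sset A B) < shapeDiff A B + ε := by
    rw [← shapeDiff_eq]; linarith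
  obtain ⟨r, hr, hlt⟩ := exists_lt_of_csInf_lt hne this
  rw [Sset_eq_range] at hr
  obtain ⟨φ, rfl⟩ := hr
  exact ⟨φ, hlt⟩

lemma Sset_congr {A' B' : Set (E n)} (hA : isomEquiv A A') (hB : isomEquiv B B') :
    Sset A B = Sset A' B' := by
  ext r
  constructor
  · rintro ⟨A₁, B₁, h₁, h₂, rfl⟩
    exact ⟨A₁, B₁, isomEquiv_trans (isomEquiv_symm hA) h₁,
      isomEquiv_trans (isomEquiv_symm hB) h₂, rfl⟩
  · rintro ⟨A₁, B₁, h₁, h₂, rfl⟩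
    exact ⟨A₁, B₁, isomEquiv_trans hA h₁, isomEquiv_trans hB h₂, rfl⟩

lemma shapeDiff_congr {A' B' : Set (E n)} (hA : isomEquiv A A') (hB : isomEquiv B B') :
    shapeDiff A B = shapeDiff A' B' := by
  rw [shapeDiff_eq, shapeDiff_eq, Sset_congr hA hB]

lemma shapeDiff_comm : shapeDiff A B = shapeDiff B A := by
  rw [shapeDiff_eq, shapeDiff_eq]
  congr 1
  ext r
  constructor
  · rintro ⟨A₁, B₁, h₁, h₂, rfl⟩
    exact ⟨B₁, A₁, h₂, h₁, hausdorffDist_comm⟩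
  · rintro ⟨A₁, B₁, h₁, h₂, rfl⟩
    exact ⟨B₁, A₁, h₂, h₁, hausdorffDist_comm⟩

lemma shapeDiff_self : shapeDiff A A = 0 := by
  apply le_antisymm
  · have h := shapeDiff_le (A := A) (B := A) (IsometryEquiv.refl _)
    have e : (IsometryEquiv.refl (E n)) '' A = A := Set.image_id A
    rw [e] at h
    simpa using h
  · exact shapeDiff_nonneg

lemma shapeDiff_triangle (hAc : IsCompact A) (hAne : A.Nonempty)
    (hBc : IsCompact B) (hBne : B.Nonempty) (hCc : IsCompact C) (hCne : C.Nonempty) :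
    shapeDiff A C ≤ shapeDiff A B + shapeDiff B C := by
  refine le_of_forall_pos_le_add (fun ε hε => ?_)
  obtain ⟨φ, hφ⟩ := exists_isometry_lt (A := A) (B := B) (half_pos hε)
  obtain ⟨ψ, hψ⟩ := exists_isometry_lt (A := B) (B := C) (half_pos hε)
  have key : shapeDiff A C ≤ hausdorffDist A ((ψ.trans φ) '' C) :=
    shapeDiff_le _
  have himg : (ψ.trans φ) '' C = φ '' (ψ '' C) := by
    simp [Set.image_image, IsometryEquiv.trans_apply]; rfl
  have hfin : EMetric.hausdorffEdist A (φ '' B) ≠ ⊤ :=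
    hausdorffEdist_ne_top_of_nonempty_of_bounded hAne (hBne.image _)
      hAc.isBounded ((hBc.image φ.continuous).isBounded)
  have htri : hausdorffDist A (φ '' (ψ '' C)) ≤
      hausdorffDist A (φ '' B) + hausdorffDist (φ '' B) (φ '' (ψ '' C)) :=
    hausdorffDist_triangle hfin
  have heq : hausdorffDist (φ '' B) (φ '' (ψ '' C)) = hausdorffDist B (ψ '' C) :=
    hausdorffDist_image φ.isometry
  rw [himg] at key
  calc shapeDiff A C ≤ hausdorffDist A (φ '' B) + hausdorffDist B (ψ '' C) := by
        rw [← heq]; exact key.trans htri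
    _ ≤ (shapeDiff A B + ε / 2) + (shapeDiff B C + ε / 2) :=
        add_le_add hφ.le hψ.le
    _ = shapeDiff A B + shapeDiff B C + ε := by ring

end SDAux

namespace SDAux
open Metric Set Filter Topology
variable {n : ℕ} {A B : Set (E n)}

lemma isomEquiv_of_shapeDiff_eq_zero (hAc : IsCompact A) (hAne : A.Nonempty)
    (hBc : IsCompact B) (hBne : B.Nonempty) (h0 : shapeDiff A B = 0) :
    isomEquiv A B := by
  -- a sequence of isometries almost matching B to A
  have H : ∀ k : ℕ, ∃ φ : E n ≃ᵢ E n,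
      hausdorffDist A (φ '' B) < 1 / (k + 1) := by
    intro k
    have hpos : (0 : ℝ) < 1 / (k + 1) := by positivity
    obtain ⟨φ, hφ⟩ := exists_isometry_lt (A := A) (B := B) hpos
    exact ⟨φ, by rwa [h0, zero_add] at hφ⟩
  choose φ hφ using H
  -- linear part and translation
  set L : ℕ → (E n →L[ℝ] E n) :=
    fun k => (φ k).toRealLinearIsometryEquiv.toLinearIsometry.toContinuousLinearMap with hL
  set c : ℕ → E n := fun k => φ k 0 with hc
  have hdec : ∀ k x, φ k x = L k x + c k := by
    intro k x
    have := (φ k).toRealLinearIsometryEquiv_apply x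
    simp only [hL, hc, LinearIsometry.coe_toContinuousLinearMap,
      LinearIsometryEquiv.coe_toLinearIsometry]
    rw [this]; abel
  have hLnorm : ∀ k x, ‖L k x‖ = ‖x‖ := by
    intro k x
    simp only [hL, LinearIsometry.coe_toContinuousLinearMap,
      LinearIsometryEquiv.coe_toLinearIsometry]
    exact (φ k).toRealLinearIsometryEquiv.norm_map x
  -- bounds
  obtain ⟨RA, hRA⟩ := hAc.isBounded.subset_closedBall 0
  obtain ⟨RB, hRB⟩ := hBc.isBounded.subset_closedBall 0
  obtain ⟨b₀, hb₀⟩ := id hBne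
  have hRB0 : 0 ≤ RB := by
    have h := hRB hb₀
    rw [mem_closedBall, dist_zero_right] at h
    exact (norm_nonneg b₀).trans h
  have hLball : ∀ k, L k ∈ closedBall (0 : E n →L[ℝ] E n) 1 := by
    intro k
    rw [mem_closedBall, dist_zero_right]
    exact ContinuousLinearMap.opNorm_le_bound _ zero_le_one
      (fun x => by rw [hLnorm]; simp)
  set Rc : ℝ := RA + 1 + RB with hRc
  have hcball : ∀ k, c k ∈ closedBall (0 : E n) Rc := by
    intro k
    have h1 : hausdorffDist A (φ k '' B) < 1 := by
      refine (hφ k).trans_le ?_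
      rw [div_le_one (by positivity)]
      linarith [Nat.cast_nonneg (α := ℝ) k]
    obtain ⟨a, ha, hdista⟩ :=
      exists_dist_lt_of_hausdorffDist_lt' (Set.mem_image_of_mem _ hb₀) h1
        (hausdorffEdist_ne_top_of_nonempty_of_bounded hAne (hBne.image _)
          hAc.isBounded ((hBc.image (φ k).continuous).isBounded))
    have hnorm_a : ‖a‖ ≤ RA := by simpa [mem_closedBall] using hRA ha
    have h2 : ‖φ k b₀‖ ≤ RA + 1 := by
      calc ‖φ k b₀‖ ≤ ‖a‖ + dist a (φ k b₀) := by
            rw [dist_comm, dist_eq_norm]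
            simpa using norm_add_le a (φ k b₀ - a)
        _ ≤ RA + 1 := add_le_add hnorm_a hdista.le
    have h3 : dist (φ k 0) (φ k b₀) = ‖b₀‖ := by
      rw [(φ k).isometry.dist_eq]; simp
    rw [mem_closedBall, dist_zero_right, hRc]
    calc ‖c k‖ ≤ ‖φ k b₀‖ + dist (φ k 0) (φ k b₀) := by
          rw [hc, dist_eq_norm]
          simpa using norm_add_le (φ k b₀) (φ k 0 - φ k b₀)
      _ ≤ (RA + 1) + RB := by
          refine add_le_add h2 ?_
          rw [h3]; simpa [mem_closedBall] using hRB hb₀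
  -- compactness extraction
  have hKcomp : IsCompact ((closedBall (0 : E n →L[ℝ] E n) 1) ×ˢ
      (closedBall (0 : E n) Rc)) :=
    (isCompact_closedBall _ _).prod (isCompact_closedBall _ _)
  obtain ⟨⟨T, d⟩, -, ι, hι, hlim⟩ :=
    hKcomp.tendsto_subseq (x := fun k => (L k, c k)) (fun k => ⟨hLball k, hcball k⟩)
  have hTlim : Tendsto (fun k => L (ι k)) atTop (𝓝 T) :=
    (continuous_fst.tendsto _).comp hlim
  have hdlim : Tendsto (fun k => c (ι k)) atTop (𝓝 d) :=
    (continuous_snd.tendsto _).comp hlim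
  -- pointwise convergence and norm preservation of T
  have hpt : ∀ x, Tendsto (fun k => L (ι k) x) atTop (𝓝 (T x)) := by
    intro x
    have : Tendsto (fun k => dist (L (ι k) x) (T x)) atTop (𝓝 0) := by
      have hb : ∀ k, dist (L (ι k) x) (T x) ≤ dist (L (ι k)) T * ‖x‖ := by
        intro k
        rw [dist_eq_norm, dist_eq_norm]
        exact ((L (ι k)) - T).le_opNorm x
      have h := (hTlim.dist (tendsto_const_nhds (x := T))).mul_const ‖x‖
      rw [dist_self, zero_mul] at h
      exact squeeze_zero (fun k => dist_nonneg) hb h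
    exact tendsto_iff_dist_tendsto_zero.2 this
  have hTnorm : ∀ x, ‖T x‖ = ‖x‖ := by
    intro x
    have h1 : Tendsto (fun k => ‖L (ι k) x‖) atTop (𝓝 ‖T x‖) := (hpt x).norm
    have h2 : (fun k => ‖L (ι k) x‖) = fun _ => ‖x‖ := by
      funext k; exact hLnorm _ x
    rw [h2] at h1
    exact tendsto_nhds_unique h1 tendsto_const_nhds
  -- build the limit isometry
  have hTinj : Function.Injective T := by
    intro x y hxy
    have : ‖x - y‖ = 0 := by
      rw [← hTnorm (x - y), map_sub, hxy, sub_self, norm_zero]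
    simpa [sub_eq_zero] using norm_eq_zero.mp this
  have hTbij : Function.Bijective (T : E n →ₗ[ℝ] E n) :=
    ⟨hTinj, (LinearMap.injective_iff_surjective).mp hTinj⟩
  let Teq : E n ≃ₗᵢ[ℝ] E n :=
    { LinearEquiv.ofBijective (T : E n →ₗ[ℝ] E n) hTbij with
      norm_map' := hTnorm }
  let Φ : E n ≃ᵢ E n := Teq.toIsometryEquiv.trans (IsometryEquiv.addRight d)
  have hΦ : ∀ x, Φ x = T x + d := fun x => rfl
  -- convergence of images in Hausdorff distance
  set ε : ℕ → ℝ := fun k => dist (L (ι k)) T * RB + dist (c (ι k)) d with hε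
  have hε0 : Tendsto ε atTop (𝓝 0) := by
    have h1 := (hTlim.dist (tendsto_const_nhds (x := T))).mul_const RB
    rw [dist_self, zero_mul] at h1
    have h2 : Tendsto (fun k => dist (c (ι k)) d) atTop (𝓝 0) :=
      tendsto_iff_dist_tendsto_zero.1 hdlim
    simpa using h1.add h2
  have hεnonneg : ∀ k, 0 ≤ ε k := fun k =>
    add_nonneg (mul_nonneg dist_nonneg hRB0) dist_nonneg
  have hclose : ∀ k, ∀ b ∈ B, dist (φ (ι k) b) (Φ b) ≤ ε k := by
    intro k b hb
    rw [hdec, hΦ, dist_eq_norm]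
    have : L (ι k) b + c (ι k) - (T b + d) = (L (ι k) - T) b + (c (ι k) - d) := by
      simp [ContinuousLinearMap.sub_apply]; abel
    rw [this]
    calc ‖(L (ι k) - T) b + (c (ι k) - d)‖
        ≤ ‖(L (ι k) - T) b‖ + ‖c (ι k) - d‖ := norm_add_le _ _
      _ ≤ ‖L (ι k) - T‖ * ‖b‖ + ‖c (ι k) - d‖ :=
          add_le_add ((L (ι k) - T).le_opNorm b) le_rfl
      _ ≤ ‖L (ι k) - T‖ * RB + ‖c (ι k) - d‖ := by
          refine add_le_add (mul_le_mul_of_nonneg_left ?_ (norm_nonneg _)) le_rfl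
          simpa [mem_closedBall] using hRB hb
      _ = ε k := by simp only [hε, dist_eq_norm]
  have hHimg : ∀ k, hausdorffDist (φ (ι k) '' B) (Φ '' B) ≤ ε k := by
    intro k
    apply hausdorffDist_le_of_mem_dist (hεnonneg k)
    · rintro x ⟨b, hb, rfl⟩
      exact ⟨Φ b, Set.mem_image_of_mem _ hb, hclose k b hb⟩
    · rintro x ⟨b, hb, rfl⟩
      exact ⟨φ (ι k) b, Set.mem_image_of_mem _ hb, by
        rw [dist_comm]; exact hclose k b hb⟩
  -- conclude hausdorffDist A (Φ '' B) = 0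
  have hfinal : hausdorffDist A (Φ '' B) = 0 := by
    have hub : ∀ k, hausdorffDist A (Φ '' B) ≤ 1 / (ι k + 1) + ε k := by
      intro k
      have hfin : EMetric.hausdorffEdist A (φ (ι k) '' B) ≠ ⊤ :=
        hausdorffEdist_ne_top_of_nonempty_of_bounded hAne (hBne.image _)
          hAc.isBounded ((hBc.image (φ (ι k)).continuous).isBounded)
      calc hausdorffDist A (Φ '' B)
          ≤ hausdorffDist A (φ (ι k) '' B) + hausdorffDist (φ (ι k) '' B) (Φ '' B) :=
            hausdorffDist_triangle hfin
        _ ≤ 1 / (ι k + 1) + ε k := add_le_add (hφ (ι k)).le (hHimg k)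
    have hlim0 : Tendsto (fun k => 1 / ((ι k : ℝ) + 1) + ε k) atTop (𝓝 0) := by
      have h1 : Tendsto (fun k => 1 / ((ι k : ℝ) + 1)) atTop (𝓝 0) := by
        refine squeeze_zero (g := fun k : ℕ => 1 / ((k : ℝ) + 1)) (fun k => ?_) (fun k => ?_)
          tendsto_one_div_add_atTop_nhds_zero_nat
        · positivity
        · show 1 / ((ι k : ℝ) + 1) ≤ 1 / ((k : ℝ) + 1)
          have hk : ((k : ℝ) + 1) ≤ ((ι k : ℝ) + 1) := by
            have : k ≤ ι k := hι.le_apply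
            linarith [(Nat.cast_le (α := ℝ)).mpr this]
          exact one_div_le_one_div_of_le (by positivity) hk
      simpa using h1.add hε0
    have hle0 : hausdorffDist A (Φ '' B) ≤ 0 := ge_of_tendsto' hlim0 hub
    exact le_antisymm hle0 hausdorffDist_nonneg
  have hAeq : A = Φ '' B := by
    refine (IsClosed.hausdorffDist_zero_iff_eq hAc.isClosed
      ((hBc.image Φ.continuous).isClosed) ?_).mp hfinal
    exact hausdorffEdist_ne_top_of_nonempty_of_bounded hAne (hBne.image _)
      hAc.isBounded ((hBc.image Φ.continuous).isBounded)
  exact isomEquiv_symm ⟨Φ, hAeq⟩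

end SDAux

namespace SDAux
variable {n : ℕ} {A B : Set (E n)}
open Metric

lemma shapeDiff_le_left (μ : E n ≃ᵢ E n) : shapeDiff A B ≤ hausdorffDist (μ '' A) B :=
  csInf_le Sset_bddBelow ⟨μ '' A, B, ⟨μ, rfl⟩, isomEquiv_refl B, rfl⟩

end SDAux

/-- The quotient of the space of nonempty compact subsets of `ℝⁿ` by isometric
equivalence, with distance induced by the shape difference `shapeDiff`,
is a complete metric space. -/
theorem shapeDiff_quotient_complete_metric (n : ℕ) :
    ∃ m : MetricSpace (Quotient (isomSetoid n)),
      (∀ A B : CompactNE n,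
        m.toDist.dist (Quotient.mk (isomSetoid n) A) (Quotient.mk (isomSetoid n) B)
          = shapeDiff A.1 B.1) ∧
      @CompleteSpace (Quotient (isomSetoid n)) m.toUniformSpace := by
  classical
  letI m : MetricSpace (Quotient (isomSetoid n)) :=
    { dist := Quotient.lift₂ (fun A B : CompactNE n => shapeDiff A.1 B.1)
        (fun _ _ _ _ hA hB => SDAux.shapeDiff_congr hA hB)
      dist_self := fun q => Quotient.inductionOn q (fun _ => SDAux.shapeDiff_self)
      dist_comm := fun p q => Quotient.inductionOn₂ p q (fun _ _ => SDAux.shapeDiff_comm)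
      dist_triangle := fun p q r => Quotient.inductionOn₃ p q r
        (fun A B C => SDAux.shapeDiff_triangle A.2.1 A.2.2 B.2.1 B.2.2 C.2.1 C.2.2)
      eq_of_dist_eq_zero := fun {p q} => Quotient.inductionOn₂ p q
        (fun A B h => Quotient.sound
          (SDAux.isomEquiv_of_shapeDiff_eq_zero A.2.1 A.2.2 B.2.1 B.2.2 h)) }
  refine ⟨m, fun A B => rfl, ?_⟩
  refine Metric.complete_of_convergent_controlled_sequences
    (fun N => (1 / 2) ^ N) (fun N => by positivity) ?_
  intro u hu
  set A : ℕ → CompactNE n := fun k => (u k).out with hA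
  have hmk : ∀ k, Quotient.mk (isomSetoid n) (A k) = u k := fun k => Quotient.out_eq _
  have hdist : ∀ j k, dist (u j) (u k) = shapeDiff (A j).1 (A k).1 := by
    intro j k; rw [← hmk j, ← hmk k]; rfl
  -- choose aligning isometries
  have Hsel : ∀ k : ℕ, ∃ φ : E n ≃ᵢ E n,
      Metric.hausdorffDist (A k).1 (φ '' (A (k + 1)).1) < (1 / 2) ^ k + (1 / 2) ^ k := by
    intro k
    obtain ⟨φ, hφ⟩ := SDAux.exists_isometry_lt (A := (A k).1) (B := (A (k + 1)).1)
      (show (0 : ℝ) < (1 / 2) ^ k by positivity)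
    have h1 := hu k k (k + 1) le_rfl (Nat.le_succ k)
    rw [hdist k (k + 1)] at h1
    exact ⟨φ, by linarith⟩
  choose φ hφ using Hsel
  -- composed isometries
  let Ψ : ℕ → (E n ≃ᵢ E n) :=
    fun k => Nat.rec (IsometryEquiv.refl (E n)) (fun k Ψk => (φ k).trans Ψk) k
  have hΨ : ∀ k, Ψ (k + 1) = (φ k).trans (Ψ k) := fun _ => rfl
  let NC : ℕ → TopologicalSpace.NonemptyCompacts (E n) := fun k =>
    ⟨⟨Ψ k '' (A k).1, (A k).2.1.image (Ψ k).continuous⟩, (A k).2.2.image _⟩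
  have hNCd : ∀ k, dist (NC k) (NC (k + 1)) ≤ 4 / 2 / 2 ^ k := by
    intro k
    rw [Metric.NonemptyCompacts.dist_eq]
    show Metric.hausdorffDist (Ψ k '' (A k).1) (Ψ (k + 1) '' (A (k + 1)).1) ≤ 4 / 2 / 2 ^ k
    have himg : Ψ (k + 1) '' (A (k + 1)).1 = Ψ k '' (φ k '' (A (k + 1)).1) := by
      rw [hΨ]; rw [Set.image_image]; rfl
    rw [himg, Metric.hausdorffDist_image (Ψ k).isometry]
    have h2 : ((1 : ℝ) / 2) ^ k + (1 / 2) ^ k = 2 / 2 ^ k := by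
      rw [div_pow, one_pow]; ring
    norm_num; linarith [hφ k, h2]
  have hcauchy : CauchySeq NC := cauchySeq_of_le_geometric_two (C := 4) hNCd
  obtain ⟨L, hL⟩ := cauchySeq_tendsto_of_complete hcauchy
  set Lc : CompactNE n := ⟨L, L.isCompact, L.nonempty⟩ with hLc
  refine ⟨Quotient.mk (isomSetoid n) Lc, ?_⟩
  rw [tendsto_iff_dist_tendsto_zero]
  have hb : ∀ k, dist (u k) (Quotient.mk (isomSetoid n) Lc) ≤ dist (NC k) L := by
    intro k
    rw [← hmk k]
    show shapeDiff (A k).1 Lc.1 ≤ _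
    rw [Metric.NonemptyCompacts.dist_eq]
    exact SDAux.shapeDiff_le_left (Ψ k)
  exact squeeze_zero (fun k => dist_nonneg) hb (tendsto_iff_dist_tendsto_zero.1 hL)
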